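/- Let X(u) = X_i Π_{j=1}^{k-1} Exp(λ_j(u) d_j) be a cumulative Lie group B-spline with velocity ω^{(k)} defined by the recursion ω^{(1)} = 0, ω^{(j)} = Ad_{A_{j-1}^{-1}} ω^{(j-1)} + λ̇_{j-1} d_{j-1}. Define ω̇^{(1)} = 0 and ω̇^{(j)} = λ̇_{j-1} [ω^{(j)}_∧, D_{j-1}]_∨ + Ad_{A_{j-1}^{-1}} ω̇^{(j-1)} + λ̈_{j-1} d_{j-1}. Then the second derivative satisfies Ẍ(u) = X(u) ((ω^{(k)})_∧² + (ω̇^{(k)})_∧). -/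

import Mathlib

open NormedSpace

attribute [local instance] Matrix.linftyOpNormedRing Matrix.linftyOpNormedAlgebra

/-- For the cumulative Lie group B-spline
`X(u) = X_i Π_{j=1}^{k-1} Exp(λ_j(u) d_j)` with velocity recursion
`ω^{(1)} = 0`, `ω^{(j)} = Ad_{A_{j-1}⁻¹} ω^{(j-1)} + λ̇_{j-1} d_{j-1}` and acceleration
recursion `ω̇^{(1)} = 0`,
`ω̇^{(j)} = λ̇_{j-1}[ω^{(j)}_∧, D_{j-1}]_∨ + Ad_{A_{j-1}⁻¹} ω̇^{(j-1)} + λ̈_{j-1} d_{j-1}`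
(expressed through the hat map), the second derivative satisfies
`Ẍ(u) = X(u) ((ω^{(k)})_∧² + (ω̇^{(k)})_∧)`. -/
theorem cumulative_spline_second_deriv {n p : ℕ} (k : ℕ) (hk : 1 ≤ k)
    (hat : (Fin p → ℝ) →ₗ[ℝ] Matrix (Fin n) (Fin n) ℝ)
    (Xi : Matrix (Fin n) (Fin n) ℝ)
    (lam : ℕ → ℝ → ℝ) (d : ℕ → Fin p → ℝ)
    (hlam : ∀ j, ContDiff ℝ 2 (lam j))
    (A : ℕ → ℝ → Matrix (Fin n) (Fin n) ℝ)
    (hA : ∀ j u, A j u = exp (lam j u • hat (d j)))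
    (X : ℝ → Matrix (Fin n) (Fin n) ℝ)
    (hX : ∀ u, X u = Xi * ((List.range (k - 1)).map (fun j => A (j + 1) u)).prod)
    (ω ωd : ℕ → ℝ → Fin p → ℝ)
    (hω1 : ∀ u, ω 1 u = 0) (hωd1 : ∀ u, ωd 1 u = 0)
    (hωrec : ∀ j u, 2 ≤ j → j ≤ k →
      hat (ω j u) = (A (j - 1) u)⁻¹ * hat (ω (j - 1) u) * A (j - 1) u
        + deriv (lam (j - 1)) u • hat (d (j - 1)))
    (hωdrec : ∀ j u, 2 ≤ j → j ≤ k →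
      hat (ωd j u)
        = deriv (lam (j - 1)) u •
            (hat (ω j u) * hat (d (j - 1)) - hat (d (j - 1)) * hat (ω j u))
          + (A (j - 1) u)⁻¹ * hat (ωd (j - 1) u) * A (j - 1) u
          + deriv (deriv (lam (j - 1))) u • hat (d (j - 1)))
    (u : ℝ) :
    HasDerivAt (deriv X) (X u * (hat (ω k u) ^ 2 + hat (ωd k u))) u := by
  -- differentiability of the scalar functions
  have hlam1 : ∀ j (v : ℝ), HasDerivAt (lam j) (deriv (lam j) v) v := fun j v =>
    (((hlam j).differentiable (by norm_num)) v).hasDerivAt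
  have hlamd : ∀ j, Differentiable ℝ (deriv (lam j)) := by
    intro j
    have h2 : ContDiff ℝ ((1 : ℕ) + 1) (lam j) := by exact_mod_cast hlam j
    have h := (contDiff_succ_iff_deriv.mp h2).2.2
    exact h.differentiable (by norm_num)
  have hlam2 : ∀ j (v : ℝ), HasDerivAt (deriv (lam j)) (deriv (deriv (lam j)) v) v :=
    fun j v => (hlamd j v).hasDerivAt
  -- derivative of A j
  have hAderiv : ∀ j (v : ℝ),
      HasDerivAt (A j) (deriv (lam j) v • (hat (d j) * A j v)) v := by
    intro j v
    have h1 : HasDerivAt (fun t : ℝ => exp (t • hat (d j)))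
        (hat (d j) * exp (lam j v • hat (d j))) (lam j v) :=
      hasDerivAt_exp_smul_const' _ _
    have h2 := HasDerivAt.scomp (𝕜 := ℝ) v h1 (hlam1 j v)
    rw [hA j v]
    simp only [Function.comp_def, ← hA] at h2 ⊢
    exact h2
  -- inverse of A j
  have hAinv : ∀ j (v : ℝ), (A j v)⁻¹ = exp ((-lam j v) • hat (d j)) := by
    intro j v
    rw [hA, ← Matrix.exp_neg, neg_smul]
  have hBderiv : ∀ j (v : ℝ),
      HasDerivAt (fun v => (A j v)⁻¹) ((-deriv (lam j) v) • (hat (d j) * (A j v)⁻¹)) v := by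
    intro j v
    have h1 : HasDerivAt (fun t : ℝ => exp (t • hat (d j)))
        (hat (d j) * exp ((-lam j v) • hat (d j))) (-lam j v) :=
      hasDerivAt_exp_smul_const' _ _
    have h2 := HasDerivAt.scomp (𝕜 := ℝ) v h1 (hlam1 j v).neg
    rw [hAinv j v]
    simp only [Function.comp_def, Pi.neg_apply, ← hAinv] at h2 ⊢
    exact h2
  -- commutation facts
  have hMA : ∀ j (v : ℝ), hat (d j) * A j v = A j v * hat (d j) := by
    intro j v
    rw [hA]
    exact ((Commute.refl (hat (d j))).smul_right (lam j v)).exp_right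
  have hMB : ∀ j (v : ℝ), hat (d j) * (A j v)⁻¹ = (A j v)⁻¹ * hat (d j) := by
    intro j v
    rw [hAinv]
    exact ((Commute.refl (hat (d j))).smul_right (-lam j v)).exp_right
  have hAB : ∀ j (v : ℝ), A j v * (A j v)⁻¹ = 1 := by
    intro j v
    rw [hAinv, hA,
      ← Matrix.exp_add_of_commute _ _ (((Commute.refl (hat (d j))).smul_right (-lam j v)).smul_left (lam j v))]
    rw [← add_smul]
    simp [exp_zero]
  -- the main induction
  have key : ∀ m, 1 ≤ m → m ≤ k →
      (∀ v : ℝ, HasDerivAt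
        (fun v => Xi * ((List.range (m - 1)).map (fun j => A (j + 1) v)).prod)
        ((Xi * ((List.range (m - 1)).map (fun j => A (j + 1) v)).prod) * hat (ω m v)) v)
      ∧ (∀ v : ℝ, HasDerivAt (fun v => hat (ω m v)) (hat (ωd m v)) v) := by
    intro m hm
    induction m, hm using Nat.le_induction with
    | base =>
      intro _
      constructor
      · intro v
        simp only [hω1, map_zero, mul_zero, Nat.sub_self, List.range_zero, List.map_nil,
          List.prod_nil]
        exact hasDerivAt_const v _
      · intro v
        have e : (fun v : ℝ => hat (ω 1 v)) = fun _ => (0 : Matrix (Fin n) (Fin n) ℝ) := by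
          funext v; rw [hω1, map_zero]
        rw [e, hωd1, map_zero]
        exact hasDerivAt_const v _
    | succ m hm ih =>
      intro hmk
      have ihm := ih (le_trans (Nat.le_succ m) hmk)
      have h2le : 2 ≤ m + 1 := by omega
      have hrec := fun v => hωrec (m + 1) v h2le hmk
      have hdrec := fun v => hωdrec (m + 1) v h2le hmk
      simp only [Nat.add_sub_cancel] at hrec hdrec
      constructor
      · intro v
        simp only [Nat.add_sub_cancel]
        have ep : ∀ w : ℝ, Xi * ((List.range m).map (fun j => A (j + 1) w)).prod
            = (Xi * ((List.range (m - 1)).map (fun j => A (j + 1) w)).prod) * A m w := by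
          intro w
          obtain ⟨t, rfl⟩ : ∃ t, m = t + 1 := ⟨m - 1, by omega⟩
          rw [List.range_succ]
          simp [mul_assoc]
        rw [funext ep]
        have h := (ihm.1 v).mul (hAderiv m v)
        refine h.congr_deriv (Eq.symm ?_)
        rw [ep v, hrec v]
        set Y := Xi * ((List.range (m - 1)).map (fun j => A (j + 1) v)).prod
        set B := (A m v)⁻¹
        set Ω := hat (ω m v)
        set M := hat (d m)
        set l1 := deriv (lam m) v
        rw [mul_add, mul_smul_comm, mul_smul_comm, hMA]
        congr 1
        · have h1 : A m v * (B * Ω * A m v) = Ω * A m v := by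
            rw [mul_assoc B Ω (A m v), ← mul_assoc (A m v) B, hAB, one_mul]
          rw [mul_assoc Y, h1, ← mul_assoc]
        · rw [mul_assoc]
      · intro v
        have e : (fun v : ℝ => hat (ω (m + 1) v))
            = fun v => (A m v)⁻¹ * hat (ω m v) * A m v + deriv (lam m) v • hat (d m) := by
          funext v; exact hrec v
        rw [e]
        have h := (((hBderiv m v).mul (ihm.2 v)).mul (hAderiv m v)).add
          ((hlam2 m v).smul_const (hat (d m)))
        refine h.congr_deriv (Eq.symm ?_)
        rw [hdrec v, hrec v]
        set Y := (A m v)⁻¹ * hat (ω m v) * A m v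
        set B := (A m v)⁻¹
        set Ω := hat (ω m v)
        set Ωd := hat (ωd m v)
        set M := hat (d m)
        set l1 := deriv (lam m) v
        set l2 := deriv (deriv (lam m)) v
        have hMAv : M * A m v = A m v * M := hMA m v
        have hMBv : M * B = B * M := hMB m v
        have r1 : (Y + l1 • M) * M - M * (Y + l1 • M) = Y * M - M * Y := by
          rw [add_mul, mul_add, smul_mul_assoc, mul_smul_comm]
          abel
        have e1 : B * Ω * (M * A m v) = Y * M := by
          rw [hMAv, ← mul_assoc]
        have e2 : M * B * Ω * A m v = M * Y := by
          simp only [Y, B, Ω, mul_assoc]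
        calc l1 • ((Y + l1 • M) * M - M * (Y + l1 • M)) + B * Ωd * A m v + l2 • M
            = l1 • (Y * M) - l1 • (M * Y) + B * Ωd * A m v + l2 • M := by
              rw [r1, smul_sub]
          _ = (-l1 • (M * B) * Ω + B * Ωd) * A m v + B * Ω * (l1 • (M * A m v)) + l2 • M := by
              rw [add_mul, neg_smul, neg_mul, neg_mul, smul_mul_assoc, smul_mul_assoc, mul_smul_comm, e1, e2]
              abel
  -- conclude
  have hX1 : ∀ v : ℝ, HasDerivAt X (X v * hat (ω k v)) v := by
    intro v
    have h := (key k hk le_rfl).1 v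
    rw [show X = fun v => Xi * ((List.range (k - 1)).map (fun j => A (j + 1) v)).prod
      from funext hX]
    exact h
  have hd : deriv X = fun v => X v * hat (ω k v) := funext fun v => (hX1 v).deriv
  rw [hd]
  have h := (hX1 u).mul ((key k hk le_rfl).2 u)
  refine h.congr_deriv (Eq.symm ?_)
  rw [mul_add, sq, ← mul_assoc]
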